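/- Let X be a bounded convex subset of ℝ^N containing 0 in its interior, with B(0, r) ⊆ X ⊆ B(0, N) for some 0 < r ≤ N. Then the map h : ℝ^N → closure(X) which fixes each point of the closure of X and sends each point y outside X to the unique intersection point of the segment [0, y] with the boundary ∂X is uniformly continuous. -/

import Mathlib

open Topology

theorem boundary_crossing_uniformly_continuous {N : ℕ}
    (X : Set (EuclideanSpace ℝ (Fin N))) (hX : Convex ℝ X)
    (r R : ℝ) (hr : 0 < r) (hrR : r ≤ R)
    (hball : Metric.ball (0 : EuclideanSpace ℝ (Fin N)) r ⊆ X)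
    (hbdd : X ⊆ Metric.ball (0 : EuclideanSpace ℝ (Fin N)) R)
    (h : EuclideanSpace ℝ (Fin N) → EuclideanSpace ℝ (Fin N))
    (hrange : ∀ z, h z ∈ closure X)
    (hfix : ∀ x ∈ closure X, h x = x)
    (hout : ∀ y ∉ X, h y ∈ segment ℝ 0 y ∩ frontier X) :
    UniformContinuous h := by
  set g : EuclideanSpace ℝ (Fin N) → ℝ := gauge X with hg
  have hR : 0 < R := hr.trans_le hrR
  have hs0 : X ∈ 𝓝 (0 : EuclideanSpace ℝ (Fin N)) :=
    Filter.mem_of_superset (Metric.ball_mem_nhds _ hr) hball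
  -- Lipschitz bound for the gauge
  have hgl : ∀ x y : EuclideanSpace ℝ (Fin N), |g x - g y| ≤ ‖x - y‖ / r := by
    intro x y
    have := (hX.lipschitzWith_gauge (r := ⟨r, hr.le⟩) (by exact_mod_cast hr)
      (by exact hball)).dist_le_mul x y
    simp only [Real.dist_eq, dist_eq_norm] at this
    calc |g x - g y| ≤ (⟨r, hr.le⟩ : NNReal)⁻¹ * ‖x - y‖ := this
      _ = ‖x - y‖ / r := by
          rw [div_eq_inv_mul]
          norm_num
  -- norm bound
  have hnorm : ∀ z : EuclideanSpace ℝ (Fin N), ‖z‖ ≤ R * max 1 (g z) := by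
    intro z
    set b := max 1 (g z) with hbdef
    have hb1 : (1:ℝ) ≤ b := le_max_left _ _
    have hb0 : (0:ℝ) < b := lt_of_lt_of_le one_pos hb1
    have hgb : g (b⁻¹ • z) ≤ 1 := by
      rw [hg, gauge_smul_of_nonneg (inv_nonneg.2 hb0.le), smul_eq_mul]
      rw [inv_mul_le_iff₀ hb0, mul_one]
      exact le_max_right _ _
    have hcl : b⁻¹ • z ∈ closure X := (gauge_le_one_iff_mem_closure hX hs0).1 hgb
    have : b⁻¹ • z ∈ Metric.closedBall (0 : EuclideanSpace ℝ (Fin N)) R :=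
      Metric.closure_ball_subset_closedBall (closure_mono hbdd hcl)
    have hn : ‖b⁻¹ • z‖ ≤ R := by simpa [Metric.mem_closedBall, dist_zero_right] using this
    have : ‖z‖ = b * ‖b⁻¹ • z‖ := by
      rw [norm_smul, norm_inv, Real.norm_eq_abs, abs_of_pos hb0]
      field_simp
    rw [this, mul_comm R b]
    exact mul_le_mul_of_nonneg_left hn hb0.le
  -- formula for h
  have hform : ∀ y, h y = (max 1 (g y))⁻¹ • y := by
    intro y
    by_cases hy : y ∈ closure X
    · have hgy : g y ≤ 1 := (gauge_le_one_iff_mem_closure hX hs0).2 hy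
      rw [hfix y hy, max_eq_left hgy, inv_one, one_smul]
    · have hyX : y ∉ X := fun hx => hy (subset_closure hx)
      obtain ⟨hseg, hfr⟩ := hout y hyX
      have hg1 : g (h y) = 1 := (gauge_eq_one_iff_mem_frontier hX hs0).2 hfr
      have hgy1 : 1 < g y := by
        by_contra hle
        exact hy ((gauge_le_one_iff_mem_closure hX hs0).1 (not_lt.1 hle))
      obtain ⟨a, b, ha, hb, hab, haby⟩ := hseg
      have hhy : h y = b • y := by rw [← haby]; simp
      have : b * g y = 1 := by
        rw [hhy, hg, gauge_smul_of_nonneg hb, smul_eq_mul] at hg1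
        exact hg1
      have hbeq : b = (g y)⁻¹ := by
        field_simp at this ⊢
        linarith [this]
      rw [hhy, hbeq, max_eq_right hgy1.le]
  -- Lipschitz constant
  set C : ℝ := 1 + R / r with hC
  have hC0 : 0 ≤ C := by positivity
  have key : ∀ x y, dist (h x) (h y) ≤ C * dist x y := by
    intro x y
    rw [hform x, hform y, dist_eq_norm, dist_eq_norm]
    set a := max 1 (g x) with hadef
    set b := max 1 (g y) with hbdef
    have ha1 : (1:ℝ) ≤ a := le_max_left _ _
    have hb1 : (1:ℝ) ≤ b := le_max_left _ _
    have ha0 : (0:ℝ) < a := lt_of_lt_of_le one_pos ha1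
    have hb0 : (0:ℝ) < b := lt_of_lt_of_le one_pos hb1
    have hsplit : a⁻¹ • x - b⁻¹ • y = a⁻¹ • (x - y) + (a⁻¹ - b⁻¹) • y := by
      module
    rw [hsplit]
    have habs : |b - a| ≤ ‖x - y‖ / r := by
      have h1 : |max (g y) 1 - max (g x) 1| ≤ |g y - g x| := abs_max_sub_max_le_abs _ _ _
      rw [max_comm, ← hbdef, max_comm, ← hadef] at h1
      calc |b - a| ≤ |g y - g x| := h1
        _ = |g x - g y| := abs_sub_comm _ _
        _ ≤ ‖x - y‖ / r := hgl x y
    have hterm1 : ‖a⁻¹ • (x - y)‖ ≤ ‖x - y‖ := by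
      rw [norm_smul, norm_inv, Real.norm_eq_abs, abs_of_pos ha0]
      calc a⁻¹ * ‖x - y‖ ≤ 1 * ‖x - y‖ := by
            apply mul_le_mul_of_nonneg_right _ (norm_nonneg _)
            rw [inv_le_one_iff₀]; right; exact ha1
        _ = ‖x - y‖ := one_mul _
    have hterm2 : ‖(a⁻¹ - b⁻¹) • y‖ ≤ R / r * ‖x - y‖ := by
      rw [norm_smul, Real.norm_eq_abs]
      have hinv : |a⁻¹ - b⁻¹| = |b - a| / (a * b) := by
        have heq : a⁻¹ - b⁻¹ = (b - a) / (a * b) := by field_simp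
        rw [heq, abs_div, abs_of_pos (mul_pos ha0 hb0)]
      rw [hinv]
      have hy' : ‖y‖ ≤ R * b := hnorm y
      calc |b - a| / (a * b) * ‖y‖ ≤ (‖x - y‖ / r) / (a * b) * (R * b) := by
            apply mul_le_mul
            · gcongr
            · exact hy'
            · exact norm_nonneg _
            · positivity
        _ = (R / r) * ‖x - y‖ * a⁻¹ := by field_simp
        _ ≤ (R / r) * ‖x - y‖ * 1 := by
            apply mul_le_mul_of_nonneg_left _ (by positivity)
            rw [inv_le_one_iff₀]; right; exact ha1
        _ = R / r * ‖x - y‖ := mul_one _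
    calc ‖a⁻¹ • (x - y) + (a⁻¹ - b⁻¹) • y‖ ≤ ‖a⁻¹ • (x - y)‖ + ‖(a⁻¹ - b⁻¹) • y‖ :=
          norm_add_le _ _
      _ ≤ ‖x - y‖ + R / r * ‖x - y‖ := add_le_add hterm1 hterm2
      _ = C * ‖x - y‖ := by rw [hC]; ring
  exact LipschitzWith.uniformContinuous
    ((lipschitzWith_iff_dist_le_mul (K := C.toNNReal)).2 (by
      intro x y
      rw [Real.coe_toNNReal _ hC0]
      exact key x y))
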